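/- Under the standing assumptions, the convex hull of the projection of the second-order ε-jet onto the gradient factor equals the Goldstein ε-subdifferential: conv(pr₃(𝒥²_ε f(x))) = ∂_ε f(x). -/

import Mathlib

open Metric Set Filter Topology MeasureTheory
open scoped NNReal ENNReal

noncomputable section

abbrev Euc (n : ℕ) := EuclideanSpace ℝ (Fin n)

abbrev JetSpace (n : ℕ) :=
  Euc n × ℝ × (Euc n →L[ℝ] ℝ) × (Euc n →L[ℝ] Euc n →L[ℝ] ℝ)

variable {n : ℕ}

/-- The 4-tuple of coefficients of the second-order Taylor expansion of `f` at `y`. -/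
def jetMap (f : Euc n → ℝ) (y : Euc n) : JetSpace n :=
  (y, f y, fderiv ℝ f y, fderiv ℝ (fderiv ℝ f) y)

/-- The second-order ε-jet of `f` at `x`. -/
def jet (f : Euc n → ℝ) (D2 : Set (Euc n)) (ε : ℝ) (x : Euc n) : Set (JetSpace n) :=
  ⋂ δ ∈ Ioi ε, closure (jetMap f '' (closedBall x δ ∩ D2))

/-- The quadratic polynomial associated to a jet element. -/
def Qpoly (j : JetSpace n) (z : Euc n) : ℝ :=
  j.2.1 + j.2.2.1 (z - j.1) + (1 / 2) * j.2.2.2 (z - j.1) (z - j.1)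

/-- The second-order model `𝒯_{x,ε}`. -/
def model (f : Euc n → ℝ) (D2 : Set (Euc n)) (ε : ℝ) (x z : Euc n) : ℝ :=
  sSup ((fun j => Qpoly j z) '' jet f D2 ε x)

/-- `θ(x,ε)`, the optimal value of the model on the closed ε-ball. -/
def theta (f : Euc n → ℝ) (D2 : Set (Euc n)) (ε : ℝ) (x : Euc n) : ℝ :=
  sInf (model f D2 ε x '' closedBall x ε)

/-- The model `𝒯^W_{x,ε}` built from a subset `W` of the jet. -/
def modelW (W : Set (JetSpace n)) (z : Euc n) : ℝ :=
  sSup ((fun j => Qpoly j z) '' W)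

/-- `θ^W(x,ε)`, the optimal value of the finite model on the closed ε-ball. -/
def thetaW (W : Set (JetSpace n)) (ε : ℝ) (x : Euc n) : ℝ :=
  sInf (modelW W '' closedBall x ε)

/-- The Clarke subdifferential of `f` at `y`. -/
def clarke (f : Euc n → ℝ) (y : Euc n) : Set (Euc n →L[ℝ] ℝ) :=
  convexHull ℝ {ξ | ∃ u : ℕ → Euc n, (∀ j, DifferentiableAt ℝ f (u j)) ∧
    Tendsto u atTop (𝓝 y) ∧ Tendsto (fun j => fderiv ℝ f (u j)) atTop (𝓝 ξ)}

/-- The Goldstein ε-subdifferential of `f` at `x`. -/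
def goldstein (f : Euc n → ℝ) (ε : ℝ) (x : Euc n) : Set (Euc n →L[ℝ] ℝ) :=
  convexHull ℝ (⋂ δ ∈ Ioi ε, closure
    {g : Euc n →L[ℝ] ℝ | ∃ y ∈ closedBall x δ, DifferentiableAt ℝ f y ∧ g = fderiv ℝ f y})

/-- The standing assumptions: `f` locally Lipschitz, `D2` the set of points of twice
differentiability, its complement a Lebesgue null set, and Hessians locally bounded. -/
def StandingAssumptions (f : Euc n → ℝ) (D2 : Set (Euc n)) : Prop :=
  LocallyLipschitz f ∧
  D2 = {y | DifferentiableAt ℝ f y ∧ DifferentiableAt ℝ (fderiv ℝ f) y} ∧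
  MeasureTheory.volume D2ᶜ = 0 ∧
  ∀ x : Euc n, ∃ U : Set (Euc n), IsOpen U ∧ x ∈ U ∧
    Bornology.IsBounded ((fun y => fderiv ℝ (fderiv ℝ f) y) '' (U ∩ D2))


open Metric Set Filter Topology MeasureTheory
open scoped NNReal ENNReal

section CompactHull

variable {F : Type*} [NormedAddCommGroup F] [NormedSpace ℝ F] [FiniteDimensional ℝ F]

omit [NormedAddCommGroup F] [NormedSpace ℝ F] [FiniteDimensional ℝ F] in
private lemma padSum {M : Type*} [AddCommMonoid M] (t : Finset F) (d : ℕ) (hcard : t.card ≤ d)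
    (f : F → M) :
    ∑ i : Fin d, (if h : (i : ℕ) < t.card then f ((t.equivFin.symm ⟨i, h⟩ : t) : F) else 0)
      = ∑ y ∈ t, f y := by
  classical
  set g : ℕ → M := fun j => if h : j < t.card then f ((t.equivFin.symm ⟨j, h⟩ : t) : F) else 0
    with hg
  have h1 : ∑ i : Fin d, g i = ∑ j ∈ Finset.range d, g j := Fin.sum_univ_eq_sum_range g d
  have h2 : ∑ j ∈ Finset.range d, g j = ∑ j ∈ Finset.range t.card, g j := by
    refine (Finset.sum_subset (Finset.range_subset_range.2 hcard) ?_).symm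
    intro j _ hj
    rw [Finset.mem_range, not_lt] at hj
    simp [hg, Nat.not_lt.2 hj]
  have h3 : ∑ j ∈ Finset.range t.card, g j
      = ∑ i : Fin t.card, f ((t.equivFin.symm i : t) : F) := by
    rw [← Fin.sum_univ_eq_sum_range (fun j => g j) t.card]
    refine Finset.sum_congr rfl fun i _ => ?_
    simp [hg, i.2]
  have h4 : ∑ i : Fin t.card, f ((t.equivFin.symm i : t) : F) = ∑ a : t, f a :=
    Equiv.sum_comp t.equivFin.symm (fun a : t => f a)
  have h5 : ∑ a : t, f (a : F) = ∑ y ∈ t, f y := Finset.sum_coe_sort t f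
  calc ∑ i : Fin d, (if h : (i : ℕ) < t.card
        then f ((t.equivFin.symm ⟨i, h⟩ : t) : F) else 0)
      = ∑ i : Fin d, g i := rfl
    _ = ∑ y ∈ t, f y := by rw [h1, h2, h3, h4, h5]

theorem isCompact_convexHull_fd {s : Set F} (hs : IsCompact s) :
    IsCompact (convexHull ℝ s) := by
  classical
  rcases s.eq_empty_or_nonempty with rfl | ⟨x₀, hx₀⟩
  · simpa using isCompact_empty
  set d := Module.finrank ℝ F + 1 with hd
  set T : Set ((Fin d → ℝ) × (Fin d → F)) := stdSimplex ℝ (Fin d) ×ˢ univ.pi (fun _ => s) with hT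
  have hTc : IsCompact T := (isCompact_stdSimplex ℝ (Fin d)).prod (isCompact_univ_pi fun _ => hs)
  have hFc : Continuous fun p : (Fin d → ℝ) × (Fin d → F) => ∑ i, p.1 i • p.2 i :=
    continuous_finset_sum _ fun i _ =>
      ((continuous_apply i).comp continuous_fst).smul ((continuous_apply i).comp continuous_snd)
  have himg : (fun p : (Fin d → ℝ) × (Fin d → F) => ∑ i, p.1 i • p.2 i) '' T = convexHull ℝ s := by
    apply Subset.antisymm
    · rintro z ⟨⟨w, v⟩, ⟨hw, hv⟩, rfl⟩
      exact mem_convexHull_of_exists_fintype w v (fun i => hw.1 i) hw.2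
        (fun i => hv i (mem_univ i)) rfl
    · intro z hz
      rw [convexHull_eq_union] at hz
      simp only [mem_iUnion] at hz
      obtain ⟨t, hts, hai, hzt⟩ := hz
      have hcard : t.card ≤ d := by
        have h := hai.card_le_finrank_succ
        simp only [Fintype.card_coe] at h
        exact h.trans (Nat.add_le_add_right (Submodule.finrank_le _) 1)
      obtain ⟨w, hw0, hw1, hwz⟩ := Finset.mem_convexHull'.1 hzt
      set W : Fin d → ℝ := fun i =>
        if h : (i : ℕ) < t.card then w ((t.equivFin.symm ⟨i, h⟩ : t) : F) else 0 with hW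
      set Z : Fin d → F := fun i =>
        if h : (i : ℕ) < t.card then ((t.equivFin.symm ⟨i, h⟩ : t) : F) else x₀ with hZ
      have hW0 : ∀ i, 0 ≤ W i := by
        intro i
        rw [hW]
        dsimp only
        split_ifs with h
        · exact hw0 _ (Finset.coe_mem _)
        · exact le_rfl
      have hW1 : ∑ i, W i = 1 := by
        rw [hW]
        rw [padSum t d hcard w]
        exact hw1
      have hZs : ∀ i, Z i ∈ s := by
        intro i
        rw [hZ]
        dsimp only
        split_ifs with h
        · exact hts (Finset.coe_mem _)
        · exact hx₀
      have hsum : ∑ i, W i • Z i = z := by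
        have h : ∑ i : Fin d, W i • Z i
            = ∑ i : Fin d, (if h : (i : ℕ) < t.card
              then (fun y => w y • y) ((t.equivFin.symm ⟨i, h⟩ : t) : F) else 0) := by
          refine Finset.sum_congr rfl fun i _ => ?_
          by_cases h : (i : ℕ) < t.card <;> simp [hW, hZ, h]
        rw [h, padSum t d hcard (fun y => w y • y)]
        exact hwz
      exact ⟨(W, Z), ⟨⟨hW0, hW1⟩, fun i _ => hZs i⟩, hsum⟩
  rw [← himg]
  exact hTc.image hFc

end CompactHull



/-- FTC-type inequality for Lipschitz functions with a.e. derivative bound. -/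
theorem lip_deriv_le {g : ℝ → ℝ} {K M t : ℝ} {N : Set ℝ}
    (ht : 0 < t) (hK : 0 ≤ K)
    (hg : ∀ a ∈ Icc (0:ℝ) t, ∀ b ∈ Icc (0:ℝ) t, a ≤ b → |g b - g a| ≤ K * (b - a))
    (hN : volume N = 0)
    (hd : ∀ s ∈ Ioo (0:ℝ) t, s ∉ N → ∃ d ≤ M, HasDerivAt g d s) :
    g t - g 0 ≤ M * t := by
  set C : ℝ := K + |M| + 1 with hC
  have hCpos : 0 < C := by positivity
  -- main estimate for arbitrary η, η'
  have main : ∀ η > (0:ℝ), ∀ η' > (0:ℝ), g t - g 0 ≤ M * t + η * t + C * η' := by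
    intro η hη η' hη'
    -- a null superset
    set N' : Set ℝ := {0, t} ∪ (N ∩ Icc 0 t) with hN'
    have hN'null : volume N' = 0 := by
      refine measure_union_null ?_ (measure_mono_null inter_subset_left hN)
      exact measure_union_null Real.volume_singleton Real.volume_singleton
    obtain ⟨U, hUN, hUopen, hUvol⟩ :=
      N'.exists_isOpen_lt_of_lt (ENNReal.ofReal η')
        (by rw [hN'null]; exact ENNReal.ofReal_pos.2 hη')
    have hUfin : volume U ≠ ⊤ := (hUvol.trans ENNReal.ofReal_lt_top).ne
    set m : ℝ → ℝ := fun s => (volume (U ∩ Ioc 0 s)).toReal with hm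
    have hmfin : ∀ s, volume (U ∩ Ioc 0 s) ≠ ⊤ :=
      fun s => ((measure_mono inter_subset_left).trans_lt
        (hUvol.trans_le le_top)).ne
    have hm_mono : Monotone m := by
      intro a b hab
      exact ENNReal.toReal_mono (hmfin b)
        (measure_mono (inter_subset_inter_right _ (Ioc_subset_Ioc_right hab)))
    have hm_lip : ∀ a b : ℝ, a ≤ b → m b ≤ m a + (b - a) := by
      intro a b hab
      have h1 : volume (U ∩ Ioc 0 b) ≤ volume (U ∩ Ioc 0 a) + ENNReal.ofReal (b - a) := by
        have hsub : U ∩ Ioc 0 b ⊆ (U ∩ Ioc 0 a) ∪ Ioc a b := by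
          intro z hz
          rcases le_or_gt z a with h | h
          · exact Or.inl ⟨hz.1, hz.2.1, h⟩
          · exact Or.inr ⟨h, hz.2.2⟩
        calc volume (U ∩ Ioc 0 b) ≤ volume ((U ∩ Ioc 0 a) ∪ Ioc a b) := measure_mono hsub
          _ ≤ volume (U ∩ Ioc 0 a) + volume (Ioc a b) := measure_union_le _ _
          _ = volume (U ∩ Ioc 0 a) + ENNReal.ofReal (b - a) := by rw [Real.volume_Ioc]
      calc m b ≤ ((volume (U ∩ Ioc 0 a)) + ENNReal.ofReal (b - a)).toReal :=
            ENNReal.toReal_mono (ENNReal.add_ne_top.2 ⟨hmfin a, ENNReal.ofReal_ne_top⟩) h1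
        _ = m a + (b - a) := by
            rw [ENNReal.toReal_add (hmfin a) ENNReal.ofReal_ne_top,
              ENNReal.toReal_ofReal (by linarith)]
    have hm_cont : Continuous m := by
      refine (LipschitzWith.of_dist_le_mul (fun a b => ?_)).continuous (K := 1)
      rw [Real.dist_eq, Real.dist_eq, NNReal.coe_one, one_mul]
      rcases le_total a b with h | h
      · rw [abs_of_nonpos (by have := hm_mono h; linarith), abs_of_nonpos (by linarith)]
        have := hm_lip a b h; linarith
      · rw [abs_of_nonneg (by have := hm_mono h; linarith), abs_of_nonneg (by linarith)]
        have := hm_lip b a h; linarith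
    set φ : ℝ → ℝ := fun s => M * s + η * s + C * m s with hφ
    have hφ_cont : Continuous φ := by fun_prop
    have hg_cont : ContinuousOn g (Icc 0 t) := by
      have hl : LipschitzOnWith K.toNNReal g (Icc 0 t) := by
        refine LipschitzOnWith.of_dist_le_mul fun a ha b hb => ?_
        rw [Real.coe_toNNReal K hK, Real.dist_eq, Real.dist_eq]
        rcases le_total a b with h | h
        · rw [abs_sub_comm (g a) (g b), abs_sub_comm a b,
            abs_of_nonneg (by linarith : (0:ℝ) ≤ b - a)]
          exact hg a ha b hb h
        · rw [abs_of_nonneg (by linarith : (0:ℝ) ≤ a - b)]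
          exact hg b hb a ha h
      exact hl.continuousOn
    set S : Set ℝ := {s ∈ Icc 0 t | g s - g 0 ≤ φ s} with hS
    have hS_closed : IsClosed S := by
      have hSeq : S = Icc 0 t ∩ (fun s => g s - g 0 - φ s) ⁻¹' Iic 0 := by
        ext s
        constructor
        · rintro ⟨h1, h2⟩
          refine ⟨h1, ?_⟩
          simp only [mem_preimage, mem_Iic]
          linarith
        · rintro ⟨h1, h2⟩
          simp only [mem_preimage, mem_Iic] at h2
          exact ⟨h1, by linarith⟩
      rw [hSeq]
      exact ContinuousOn.preimage_isClosed_of_isClosed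
        ((hg_cont.sub continuousOn_const).sub hφ_cont.continuousOn) isClosed_Icc isClosed_Iic
    have hm0 : m 0 = 0 := by simp [hm]
    have h0S : (0:ℝ) ∈ S := by
      refine ⟨⟨le_rfl, ht.le⟩, ?_⟩
      simp [hφ, hm0]
    have hbdd : BddAbove S := ⟨t, fun s hs => hs.1.2⟩
    set c := sSup S with hc
    have hcS : c ∈ S := hS_closed.csSup_mem ⟨0, h0S⟩ hbdd
    have hc0 : 0 ≤ c := hcS.1.1
    have hct : c ≤ t := hcS.1.2
    have hkey : ¬ c < t := by
      intro hlt
      by_cases hcU : c ∈ U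
      · obtain ⟨b, hbpos, hbball⟩ := Metric.isOpen_iff.1 hUopen c hcU
        set s := min (c + b / 2) t with hs'
        have hcs : c < s := lt_min (by linarith) hlt
        have hst : s ≤ t := min_le_right _ _
        have hsIcc : s ∈ Icc 0 t := ⟨le_trans hc0 hcs.le, hst⟩
        have hIocU : Ioc c s ⊆ U := by
          intro z hz
          apply hbball
          rw [mem_ball, Real.dist_eq, abs_of_pos (by linarith [hz.1])]
          have : z ≤ c + b / 2 := le_trans hz.2 (min_le_left _ _)
          linarith
        have hmeas : m c + (s - c) ≤ m s := by
          have hsub : (U ∩ Ioc 0 c) ∪ Ioc c s ⊆ U ∩ Ioc 0 s := by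
            rintro z (⟨h1, h2⟩ | h1)
            · exact ⟨h1, h2.1, le_trans h2.2 hcs.le⟩
            · exact ⟨hIocU h1, lt_of_le_of_lt hc0 h1.1, h1.2⟩
          have hdisj : Disjoint (U ∩ Ioc 0 c) (Ioc c s) := by
            rw [Set.disjoint_left]
            rintro z ⟨_, _, hz2⟩ hz3
            exact absurd hz3.1 (not_lt.2 hz2)
          have := measure_mono (μ := volume) hsub
          rw [measure_union (μ := volume) hdisj measurableSet_Ioc, Real.volume_Ioc] at this
          have h2 := ENNReal.toReal_mono (hmfin s) this
          rw [ENNReal.toReal_add (hmfin c) ENNReal.ofReal_ne_top,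
            ENNReal.toReal_ofReal (by linarith)] at h2
          exact h2
        have hgs : g s - g c ≤ K * (s - c) :=
          le_trans (le_abs_self _) (hg c hcS.1 s hsIcc hcs.le)
        have hsS : s ∈ S := by
          refine ⟨hsIcc, ?_⟩
          have h1 : g c - g 0 ≤ φ c := hcS.2
          have h2 : φ c + (M + η + C) * (s - c) ≤ φ s := by
            have : C * (m c + (s - c)) ≤ C * m s := by
              exact mul_le_mul_of_nonneg_left hmeas hCpos.le
            simp only [hφ]; ring_nf; nlinarith
          have h3 : K * (s - c) ≤ (M + η + C) * (s - c) := by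
            have : K ≤ M + η + C := by
              have := abs_nonneg M; have := neg_abs_le M; rw [hC]; linarith
            exact mul_le_mul_of_nonneg_right this (by linarith)
          linarith
        exact absurd (le_csSup hbdd hsS) (not_le.2 hcs)
      · -- c is a point of differentiability
        have hc0' : 0 < c := by
          rcases eq_or_lt_of_le hc0 with h | h
          · exact absurd (hUN (Or.inl (Or.inl h.symm))) hcU
          · exact h
        have hcN : c ∉ N := fun h => hcU (hUN (Or.inr ⟨h, hc0, hct⟩))
        obtain ⟨d, hdM, hder⟩ := hd c ⟨hc0', hlt⟩ hcN
        have hslope : ∀ᶠ s in 𝓝[>] c, slope g c s < d + η := by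
          have h1 : Tendsto (slope g c) (𝓝[>] c) (𝓝 d) :=
            (hasDerivAt_iff_tendsto_slope.1 hder).mono_left
              (nhdsWithin_mono c fun z hz => ne_of_gt hz)
          exact h1.eventually_lt_const (by linarith)
        have hmem : ∀ᶠ s in 𝓝[>] c, s ∈ Ioc c t :=
          eventually_of_mem (Ioc_mem_nhdsGT hlt) fun z hz => hz
        obtain ⟨s, hs1, hs2⟩ := (hslope.and hmem).exists
        have hcs : c < s := hs2.1
        have hsIcc : s ∈ Icc 0 t := ⟨le_trans hc0 hcs.le, hs2.2⟩
        have hgs : g s - g c < (d + η) * (s - c) := by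
          have h1 : slope g c s = (g s - g c) / (s - c) := slope_def_field g c s
          rw [h1] at hs1
          have hne : s - c ≠ 0 := sub_ne_zero.2 (ne_of_gt hcs)
          calc g s - g c = (g s - g c) / (s - c) * (s - c) := (div_mul_cancel₀ _ hne).symm
            _ < (d + η) * (s - c) := mul_lt_mul_of_pos_right hs1 (by linarith)
        have hsS : s ∈ S := by
          refine ⟨hsIcc, ?_⟩
          have h1 : g c - g 0 ≤ φ c := hcS.2
          have h2 : φ c + (M + η) * (s - c) ≤ φ s := by
            have h3 : C * m c ≤ C * m s := mul_le_mul_of_nonneg_left (hm_mono hcs.le) hCpos.le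
            simp only [hφ]; nlinarith
          have h4 : (d + η) * (s - c) ≤ (M + η) * (s - c) := by
            exact mul_le_mul_of_nonneg_right (by linarith) (by linarith)
          linarith
        exact absurd (le_csSup hbdd hsS) (not_le.2 hcs)
    have hceq : c = t := le_antisymm hct (not_lt.1 hkey)
    have htS : t ∈ S := hceq ▸ hcS
    have hmt : m t ≤ η' := by
      have h1 : volume (U ∩ Ioc 0 t) ≤ ENNReal.ofReal η' :=
        le_trans (measure_mono inter_subset_left) hUvol.le
      exact ENNReal.toReal_le_of_le_ofReal hη'.le h1
    have := htS.2
    have hφt : φ t ≤ M * t + η * t + C * η' := by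
      simp only [hφ]
      have := mul_le_mul_of_nonneg_left hmt hCpos.le
      linarith
    linarith
  -- conclude
  refine le_of_forall_pos_le_add fun ε hε => ?_
  have h1 := main (ε / (2 * (t + 1))) (by positivity) (ε / (2 * C)) (by positivity)
  have h2 : C * (ε / (2 * C)) = ε / 2 := by field_simp
  have h3 : ε / (2 * (t + 1)) * t ≤ ε / 2 := by
    rw [div_mul_eq_mul_div, div_le_div_iff₀ (by positivity) (by norm_num)]
    nlinarith
  linarith

set_option maxHeartbeats 1000000
set_option synthInstance.maxHeartbeats 400000

section MainWork

private def Pset (f : Euc n → ℝ) (D2 : Set (Euc n)) (x : Euc n) (δ : ℝ) :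
    Set (Euc n →L[ℝ] ℝ) :=
  {g | ∃ z ∈ closedBall x δ ∩ D2, g = fderiv ℝ f z}

private lemma Pset_mono (f : Euc n → ℝ) (D2 : Set (Euc n)) (x : Euc n) {δ δ' : ℝ}
    (h : δ ≤ δ') : Pset f D2 x δ ⊆ Pset f D2 x δ' := by
  rintro g ⟨z, ⟨hz1, hz2⟩, rfl⟩
  exact ⟨z, ⟨closedBall_subset_closedBall h hz1, hz2⟩, rfl⟩

private lemma dual_repr {E : Type*} [NormedAddCommGroup E] [NormedSpace ℝ E]
    [FiniteDimensional ℝ E] (Φ : (E →L[ℝ] ℝ) →L[ℝ] ℝ) :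
    ∃ v : E, ∀ ξ : E →L[ℝ] ℝ, Φ ξ = ξ v := by
  classical
  let e : (E →ₗ[ℝ] ℝ) ≃ₗ[ℝ] (E →L[ℝ] ℝ) := LinearMap.toContinuousLinearMap
  let Φ' : Module.Dual ℝ (Module.Dual ℝ E) := Φ.toLinearMap.comp e.toLinearMap
  refine ⟨(Module.evalEquiv ℝ E).symm Φ', fun ξ => ?_⟩
  have h := Module.apply_evalEquiv_symm_apply ℝ E ξ.toLinearMap Φ'
  have h2 : Φ' ξ.toLinearMap = Φ (e ξ.toLinearMap) := rfl
  have h3 : e ξ.toLinearMap = ξ := by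
    apply ContinuousLinearMap.ext; intro w; rfl
  rw [h2, h3] at h
  exact h.symm

private lemma grad_bound (f : Euc n → ℝ) (hf : LocallyLipschitz f) (x : Euc n) (R : ℝ) :
    ∃ L : ℝ, 0 ≤ L ∧ ∀ z ∈ closedBall x R, DifferentiableAt ℝ f z → ‖fderiv ℝ f z‖ ≤ L := by
  classical
  choose Kz tz htz hlip using hf
  obtain ⟨fs, hfs⟩ := (isCompact_closedBall x R).elim_nhds_subcover'
    (fun z _ => interior (tz z))
    (fun z _ => isOpen_interior.mem_nhds (mem_interior_iff_mem_nhds.2 (htz z)))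
  refine ⟨∑ p ∈ fs, (Kz p : ℝ), Finset.sum_nonneg fun p _ => (Kz p).coe_nonneg, ?_⟩
  intro z hz hdiff
  have mem := hfs hz
  simp only [mem_iUnion] at mem
  obtain ⟨p, hp, hzin⟩ := mem
  have h1 : ‖fderiv ℝ f z‖ ≤ Kz p :=
    hdiff.hasFDerivAt.le_of_lipschitzOn (isOpen_interior.mem_nhds hzin)
      ((hlip p).mono interior_subset)
  exact h1.trans (Finset.single_le_sum (f := fun q : ↥(closedBall x R) => ((Kz ↑q : ℝ≥0) : ℝ))
    (fun q _ => (Kz (↑q : Euc n)).coe_nonneg) hp)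

private lemma hess_bound (f : Euc n → ℝ) (D2 : Set (Euc n))
    (hf4 : ∀ x : Euc n, ∃ U : Set (Euc n), IsOpen U ∧ x ∈ U ∧
      Bornology.IsBounded ((fun y => fderiv ℝ (fderiv ℝ f) y) '' (U ∩ D2)))
    (x : Euc n) (R : ℝ) :
    ∃ H : ℝ, ∀ z ∈ closedBall x R ∩ D2, ‖fderiv ℝ (fderiv ℝ f) z‖ ≤ H := by
  classical
  choose Uz hUopen hUmem hUbdd using hf4
  have hrad : ∀ z : Euc n, ∃ r : ℝ, 0 ≤ r ∧
      ∀ w ∈ (fun y => fderiv ℝ (fderiv ℝ f) y) '' (Uz z ∩ D2), ‖w‖ ≤ r := by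
    intro z
    obtain ⟨r, hr⟩ := (isBounded_iff_forall_norm_le).1 (hUbdd z)
    exact ⟨max r 0, le_max_right _ _, fun w hw => (hr w hw).trans (le_max_left _ _)⟩
  choose rz hrz0 hrz using hrad
  obtain ⟨fs, hfs⟩ := (isCompact_closedBall x R).elim_nhds_subcover'
    (fun z _ => Uz z) (fun z _ => (hUopen z).mem_nhds (hUmem z))
  refine ⟨∑ p ∈ fs, rz p, ?_⟩
  rintro z ⟨hz1, hz2⟩
  have mem := hfs hz1
  simp only [mem_iUnion] at mem
  obtain ⟨p, hp, hzin⟩ := mem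
  have h1 : ‖fderiv ℝ (fderiv ℝ f) z‖ ≤ rz p := hrz p _ ⟨z, ⟨hzin, hz2⟩, rfl⟩
  exact h1.trans (Finset.single_le_sum (f := fun q : ↥(closedBall x R) => rz ↑q)
    (fun q _ => hrz0 ↑q) hp)

private lemma inter_Pset_subset_proj (f : Euc n → ℝ) (D2 : Set (Euc n))
    (hsa : StandingAssumptions f D2) (x : Euc n) {ε : ℝ} (hε : 0 ≤ ε) :
    (⋂ δ ∈ Ioi ε, closure (Pset f D2 x δ)) ⊆ (fun j : JetSpace n => j.2.2.1) '' jet f D2 ε x := by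
  obtain ⟨hlip, hD2, hnull, hbdd⟩ := hsa
  have hD2diff : ∀ z ∈ D2, DifferentiableAt ℝ f z := fun z hz => by
    rw [hD2] at hz; exact hz.1
  intro g hg
  simp only [mem_iInter] at hg
  have hchoice : ∀ k : ℕ, ∃ z : Euc n, z ∈ closedBall x (ε + 1/(k+1)) ∧ z ∈ D2 ∧
      dist g (fderiv ℝ f z) < 1/(k+1) := by
    intro k
    have hδ : ε < ε + 1/(k+1) := lt_add_of_pos_right ε (by positivity)
    have h1 := hg (ε + 1/(k+1)) hδ
    rw [Metric.mem_closure_iff] at h1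
    obtain ⟨b, hb, hdist⟩ := h1 (1/(k+1)) (by positivity)
    obtain ⟨z, ⟨hz1, hz2⟩, rfl⟩ := hb
    exact ⟨z, hz1, hz2, hdist⟩
  choose z hz1 hz2 hz3 using hchoice
  obtain ⟨L, hL0, hL⟩ := grad_bound f hlip x (ε + 1)
  obtain ⟨H, hH⟩ := hess_bound f D2 hbdd x (ε + 1)
  obtain ⟨B, hB⟩ := (isCompact_closedBall x (ε+1)).exists_bound_of_continuousOn
    (hlip.continuous.continuousOn)
  haveI : ProperSpace (Euc n →L[ℝ] ℝ) := FiniteDimensional.proper ℝ _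
  haveI : ProperSpace (Euc n →L[ℝ] Euc n →L[ℝ] ℝ) := FiniteDimensional.proper ℝ (Euc n →L[ℝ] Euc n →L[ℝ] ℝ)
  set Kc : Set (JetSpace n) :=
    closedBall x (ε+1) ×ˢ (Icc (-B) B) ×ˢ (closedBall 0 L) ×ˢ (closedBall 0 H) with hKc
  have hKcomp : IsCompact Kc := (isCompact_closedBall _ _).prod ((isCompact_Icc).prod
    ((isCompact_closedBall _ _).prod (isCompact_closedBall _ _)))
  have hone : ∀ k : ℕ, (1:ℝ)/(k+1) ≤ 1 := by
    intro k
    rw [div_le_one (by positivity)]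
    have : (0:ℝ) ≤ k := Nat.cast_nonneg k
    linarith
  have hsubk : ∀ k, z k ∈ closedBall x (ε + 1) := fun k =>
    closedBall_subset_closedBall (by linarith [hone k]) (hz1 k)
  have hmem : ∀ k, jetMap f (z k) ∈ Kc := by
    intro k
    have c2 : f (z k) ∈ Icc (-B) B := by
      have h2 := hB _ (hsubk k)
      rw [Real.norm_eq_abs] at h2
      exact abs_le.1 h2
    have c3 : fderiv ℝ f (z k) ∈ closedBall (0 : Euc n →L[ℝ] ℝ) L :=
      mem_closedBall_zero_iff.2 (hL _ (hsubk k) (hD2diff _ (hz2 k)))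
    have c4 : fderiv ℝ (fderiv ℝ f) (z k) ∈ closedBall (0 : Euc n →L[ℝ] Euc n →L[ℝ] ℝ) H :=
      (mem_closedBall_zero_iff (E := Euc n →L[ℝ] Euc n →L[ℝ] ℝ)).2 (hH _ ⟨hsubk k, hz2 k⟩)
    exact ⟨hsubk k, c2, c3, c4⟩
  obtain ⟨j, hjK, φ, hφ, hconv⟩ := hKcomp.tendsto_subseq hmem
  have hgrad_tend : Tendsto (fun k => fderiv ℝ f (z k)) atTop (𝓝 g) := by
    rw [tendsto_iff_dist_tendsto_zero]
    refine squeeze_zero (fun k => dist_nonneg) (fun k => ?_)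
      tendsto_one_div_add_atTop_nhds_zero_nat
    rw [dist_comm]
    exact (hz3 k).le
  have hproj_cont : Continuous (fun j : JetSpace n => j.2.2.1) :=
    continuous_fst.comp (continuous_snd.comp continuous_snd)
  have h1 : Tendsto (fun k => fderiv ℝ f (z (φ k))) atTop (𝓝 j.2.2.1) :=
    (hproj_cont.tendsto j).comp hconv
  have h2 : Tendsto (fun k => fderiv ℝ f (z (φ k))) atTop (𝓝 g) :=
    hgrad_tend.comp hφ.tendsto_atTop
  have hjg : j.2.2.1 = g := tendsto_nhds_unique h1 h2
  refine ⟨j, ?_, hjg⟩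
  rw [jet]
  simp only [mem_iInter]
  intro δ hδ
  rw [mem_Ioi] at hδ
  obtain ⟨m, hm⟩ := exists_nat_one_div_lt (by linarith : (0:ℝ) < δ - ε)
  refine mem_closure_of_tendsto hconv ?_
  rw [eventually_atTop]
  refine ⟨m, fun k hk => ?_⟩
  refine ⟨z (φ k), ⟨?_, hz2 _⟩, rfl⟩
  have hφk : (m:ℝ) ≤ (φ k : ℝ) := by exact_mod_cast le_trans hk hφ.le_apply
  have hppos : (0:ℝ) < (m:ℝ) + 1 := by positivity
  have hmono2 : (1:ℝ)/(φ k + 1) ≤ 1/(m+1) :=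
    one_div_le_one_div_of_le hppos (by linarith)
  refine closedBall_subset_closedBall ?_ (hz1 (φ k))
  linarith

private lemma clarke_null (f : Euc n → ℝ) (D2 : Set (Euc n)) (hlip : LocallyLipschitz f)
    (hD2diff : ∀ z ∈ D2, DifferentiableAt ℝ f z) (hnull : MeasureTheory.volume D2ᶜ = 0)
    {y : Euc n} (hy : DifferentiableAt ℝ f y) {r : ℝ} (hr : 0 < r) :
    fderiv ℝ f y ∈ convexHull ℝ
      (closure {g : Euc n →L[ℝ] ℝ | ∃ z ∈ ball y r ∩ D2, g = fderiv ℝ f z}) := by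
  classical
  haveI : ProperSpace (Euc n →L[ℝ] ℝ) := FiniteDimensional.proper ℝ _
  obtain ⟨K, W, hW, hlipW⟩ := hlip y
  obtain ⟨a, ha, haW⟩ := Metric.mem_nhds_iff.1 hW
  set ρ : ℝ := min (r/2) (a/3) with hρdef
  have hρpos : 0 < ρ := lt_min (by linarith) (by linarith)
  have hρr : ρ < r := lt_of_le_of_lt (min_le_left _ _) (by linarith)
  have hballW : ball y (2*ρ) ⊆ W := by
    refine subset_trans (ball_subset_ball ?_) haW
    have : ρ ≤ a/3 := min_le_right _ _
    linarith
  have hlipB : LipschitzOnWith K f (ball y (2*ρ)) := hlipW.mono hballW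
  have hmono : {g : Euc n →L[ℝ] ℝ | ∃ z ∈ ball y ρ ∩ D2, g = fderiv ℝ f z} ⊆
      {g : Euc n →L[ℝ] ℝ | ∃ z ∈ ball y r ∩ D2, g = fderiv ℝ f z} := by
    rintro g ⟨z, ⟨hz1, hz2⟩, rfl⟩
    exact ⟨z, ⟨ball_subset_ball hρr.le hz1, hz2⟩, rfl⟩
  refine convexHull_mono (closure_mono hmono) ?_
  set Base : Set (Euc n →L[ℝ] ℝ) := {g | ∃ z ∈ ball y ρ ∩ D2, g = fderiv ℝ f z} with hBase
  set Cs : Set (Euc n →L[ℝ] ℝ) := closure Base with hCs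
  have hBase_bdd : Base ⊆ closedBall 0 K := by
    rintro g ⟨z, ⟨hz1, hz2⟩, rfl⟩
    rw [mem_closedBall_zero_iff]
    exact (hD2diff z hz2).hasFDerivAt.le_of_lipschitzOn
      (isOpen_ball.mem_nhds (ball_subset_ball (by linarith) hz1)) hlipB
  have hCs_bdd : Cs ⊆ closedBall 0 K := closure_minimal hBase_bdd Metric.isClosed_closedBall
  have hCs_comp : IsCompact Cs :=
    (isCompact_closedBall _ _).of_isClosed_subset isClosed_closure hCs_bdd
  by_contra hG
  have hKH_comp : IsCompact (convexHull ℝ Cs) := isCompact_convexHull_fd hCs_comp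
  obtain ⟨Φ, u, hΦlt, hΦG⟩ :=
    geometric_hahn_banach_closed_point (convex_convexHull ℝ Cs) hKH_comp.isClosed hG
  obtain ⟨v, hv⟩ := dual_repr Φ
  rw [hv] at hΦG
  set G := fderiv ℝ f y with hGdef
  set γ : ℝ := G v - u with hγdef
  have hγ : 0 < γ := by rw [hγdef]; linarith
  have hline0 : HasDerivAt (fun s : ℝ => y + s • v) v 0 := by
    simpa using ((hasDerivAt_id (0:ℝ)).smul_const v).const_add y
  have hfd : HasDerivAt (fun s : ℝ => f (y + s • v)) (G v) 0 := by
    have h0 : HasFDerivAt f G (y + (0:ℝ) • v) := by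
      rw [hGdef]
      simpa using hy.hasFDerivAt
    exact h0.comp_hasDerivAt 0 hline0
  set t₀ : ℝ := ρ / (2 * (‖v‖ + 1)) with ht₀def
  have ht₀pos : 0 < t₀ := by positivity
  have ht₀v : t₀ * ‖v‖ ≤ ρ / 2 := by
    rw [ht₀def, div_mul_eq_mul_div, div_le_div_iff₀ (by positivity) (by norm_num)]
    nlinarith [norm_nonneg v]
  have hslope : ∀ᶠ s in 𝓝[>] (0:ℝ), u + γ/2 < slope (fun s : ℝ => f (y + s • v)) 0 s := by
    have h1 : Tendsto (slope (fun s : ℝ => f (y + s • v)) 0) (𝓝[>] 0) (𝓝 (G v)) :=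
      (hasDerivAt_iff_tendsto_slope.1 hfd).mono_left
        (nhdsWithin_mono 0 fun z hz => ne_of_gt hz)
    refine h1.eventually_const_lt ?_
    rw [hγdef]; linarith
  have hmemt : ∀ᶠ s in 𝓝[>] (0:ℝ), s ∈ Ioc 0 t₀ :=
    eventually_of_mem (Ioc_mem_nhdsGT ht₀pos) fun z hz => hz
  obtain ⟨t, hts, htIoc⟩ := (hslope.and hmemt).exists
  have htpos : 0 < t := htIoc.1
  have hslope_t : (u + γ/2) * t < f (y + t • v) - f y := by
    have h1 : slope (fun s : ℝ => f (y + s • v)) 0 t = (f (y + t • v) - f y) / t := by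
      rw [slope_def_field]
      simp
    rw [h1] at hts
    have h2 := mul_lt_mul_of_pos_right hts htpos
    rwa [div_mul_cancel₀ _ (ne_of_gt htpos)] at h2
  set Ahat := toMeasurable MeasureTheory.volume D2ᶜ with hAhat
  have hAnull : MeasureTheory.volume Ahat = 0 := by
    rw [hAhat, measure_toMeasurable]; exact hnull
  have hAmeas : MeasurableSet Ahat := measurableSet_toMeasurable _ _
  have hAsub : D2ᶜ ⊆ Ahat := subset_toMeasurable _ _
  set B' : Set (ℝ × Euc n) := {p | p.2 + p.1 • v ∈ Ahat} with hB'
  have hB'meas : MeasurableSet B' :=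
    (continuous_snd.add (continuous_fst.smul continuous_const)).measurable hAmeas
  have hB'null : (MeasureTheory.volume : MeasureTheory.Measure (ℝ × Euc n)) B' = 0 := by
    rw [MeasureTheory.Measure.volume_eq_prod, MeasureTheory.Measure.prod_apply hB'meas]
    have hslice : ∀ s : ℝ, MeasureTheory.volume (Prod.mk s ⁻¹' B') = 0 := by
      intro s
      have heq : Prod.mk s ⁻¹' B' = (· + s • v) ⁻¹' Ahat := rfl
      rw [heq, measure_preimage_add_right]
      exact hAnull
    simp only [hslice]
    simp
  set B : Set (Euc n × ℝ) := {p | p.1 + p.2 • v ∈ Ahat} with hB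
  have hBnull : (MeasureTheory.volume : MeasureTheory.Measure (Euc n × ℝ)) B = 0 := by
    have hswap : B = Prod.swap ⁻¹' B' := rfl
    rw [MeasureTheory.Measure.volume_eq_prod, hswap,
      ← MeasureTheory.Measure.map_apply measurable_swap hB'meas,
      MeasureTheory.Measure.prod_swap]
    rw [MeasureTheory.Measure.volume_eq_prod] at hB'null
    exact hB'null
  have hae : ∀ᵐ w : Euc n, ∀ᵐ s : ℝ, w + s • v ∉ Ahat := by
    have h1 : ∀ᵐ p : Euc n × ℝ, p ∉ B := by
      rw [MeasureTheory.ae_iff]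
      simpa using hBnull
    rw [MeasureTheory.Measure.volume_eq_prod] at h1
    exact MeasureTheory.Measure.ae_ae_of_ae_prod h1
  set η : ℝ := min (γ * t / (4 * ((K:ℝ) + 1))) (ρ/2) with hηdef
  have hηpos : 0 < η := lt_min (by positivity) (by linarith)
  have hηρ : η ≤ ρ/2 := min_le_right _ _
  have hηγ : η ≤ γ * t / (4 * ((K:ℝ) + 1)) := min_le_left _ _
  have hGSex : ∃ w, w ∈ ball y η ∧ ∀ᵐ s : ℝ, w + s • v ∉ Ahat := by
    by_contra hno
    push_neg at hno
    have hsub : ball y η ⊆ {w : Euc n | ¬ ∀ᵐ s : ℝ, w + s • v ∉ Ahat} := fun w hw => hno w hw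
    have h0 := measure_mono_null hsub (MeasureTheory.ae_iff.1 hae)
    exact absurd h0 (measure_ball_pos MeasureTheory.volume y hηpos).ne'
  obtain ⟨w, hwball, hwae⟩ := hGSex
  set N : Set ℝ := {s | w + s • v ∈ Ahat} with hNdef
  have hNnull : MeasureTheory.volume N = 0 := by
    have h0 := MeasureTheory.ae_iff.1 hwae
    simpa [hNdef] using h0
  set gl : ℝ → ℝ := fun s => f (w + s • v) with hgl
  have hwy : dist w y < η := mem_ball.1 hwball
  have hdistmove : ∀ s : ℝ, 0 ≤ s → dist (w + s • v) y < η + s * ‖v‖ := by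
    intro s hs
    have h1 : dist (w + s • v) y ≤ dist (w + s • v) w + dist w y := dist_triangle _ _ _
    have h2 : dist (w + s • v) w = ‖s • v‖ := by
      rw [dist_eq_norm]; simp
    rw [norm_smul, Real.norm_eq_abs, abs_of_nonneg hs] at h2
    linarith
  have hsegρ : ∀ s ∈ Icc (0:ℝ) t, w + s • v ∈ ball y ρ := by
    intro s hs
    rw [mem_ball]
    have h1 := hdistmove s hs.1
    have h3 : s * ‖v‖ ≤ t₀ * ‖v‖ :=
      mul_le_mul_of_nonneg_right (hs.2.trans htIoc.2) (norm_nonneg v)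
    linarith [ht₀v]
  have hseg : ∀ s ∈ Icc (0:ℝ) t, w + s • v ∈ ball y (2*ρ) := fun s hs =>
    ball_subset_ball (by linarith) (hsegρ s hs)
  have hgl_lip : ∀ a ∈ Icc (0:ℝ) t, ∀ b ∈ Icc (0:ℝ) t, a ≤ b →
      |gl b - gl a| ≤ ((K:ℝ) * ‖v‖) * (b - a) := by
    intro a ha b hb hab
    have h1 : dist (gl b) (gl a) ≤ K * dist (w + b • v) (w + a • v) :=
      hlipB.dist_le_mul _ (hseg b hb) _ (hseg a ha)
    have h2 : dist (w + b • v) (w + a • v) = (b - a) * ‖v‖ := by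
      rw [dist_eq_norm]
      have heq : (w + b • v) - (w + a • v) = (b - a) • v := by
        rw [sub_smul]; abel
      rw [heq, norm_smul, Real.norm_eq_abs, abs_of_nonneg (by linarith)]
    rw [Real.dist_eq, h2] at h1
    calc |gl b - gl a| ≤ (K:ℝ) * ((b - a) * ‖v‖) := h1
      _ = ((K:ℝ) * ‖v‖) * (b - a) := by ring
  have hderiv : ∀ s ∈ Ioo (0:ℝ) t, s ∉ N → ∃ d ≤ u, HasDerivAt gl d s := by
    intro s hs hsN
    have hzD2 : w + s • v ∈ D2 := by
      by_contra h
      exact hsN (hAsub h)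
    have hdiff := hD2diff _ hzD2
    have hlines : HasDerivAt (fun s' : ℝ => w + s' • v) v s := by
      simpa using ((hasDerivAt_id s).smul_const v).const_add w
    have hder : HasDerivAt gl (fderiv ℝ f (w + s • v) v) s := by
      have h := hdiff.hasFDerivAt.comp_hasDerivAt s hlines
      exact h
    refine ⟨_, ?_, hder⟩
    have hmem2 : fderiv ℝ f (w + s • v) ∈ Base :=
      ⟨w + s • v, ⟨hsegρ s ⟨hs.1.le, hs.2.le⟩, hzD2⟩, rfl⟩
    have hKHmem : fderiv ℝ f (w + s • v) ∈ convexHull ℝ Cs :=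
      subset_convexHull ℝ Cs (subset_closure hmem2)
    have h3 := hΦlt _ hKHmem
    rw [hv] at h3
    exact h3.le
  have hmain := lip_deriv_le htpos (by positivity : (0:ℝ) ≤ (K:ℝ) * ‖v‖) hgl_lip hNnull hderiv
  -- compare f (y + t • v) - f y with gl t - gl 0
  have hy2ρ : y ∈ ball y (2*ρ) := mem_ball_self (by linarith)
  have hyt : y + t • v ∈ ball y (2*ρ) := by
    rw [mem_ball]
    have h2 : dist (y + t • v) y = t * ‖v‖ := by
      rw [dist_eq_norm]
      simp [norm_smul, abs_of_nonneg htpos.le]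
    have h3 : t * ‖v‖ ≤ t₀ * ‖v‖ := mul_le_mul_of_nonneg_right htIoc.2 (norm_nonneg v)
    linarith [ht₀v]
  have hw2ρ : w ∈ ball y (2*ρ) := by
    have h := hseg 0 ⟨le_rfl, htpos.le⟩
    simpa using h
  have hwt : w + t • v ∈ ball y (2*ρ) := hseg t ⟨htpos.le, le_rfl⟩
  have hcmp1 : |f (y + t • v) - f (w + t • v)| ≤ (K:ℝ) * η := by
    have h1 : dist (f (y + t • v)) (f (w + t • v)) ≤ K * dist (y + t • v) (w + t • v) :=
      hlipB.dist_le_mul _ hyt _ hwt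
    have h2 : dist (y + t • v) (w + t • v) = dist y w := dist_add_right y w (t • v)
    rw [Real.dist_eq, h2] at h1
    refine h1.trans ?_
    have := hwy
    rw [dist_comm] at this
    exact mul_le_mul_of_nonneg_left this.le K.coe_nonneg
  have hcmp2 : |f w - f y| ≤ (K:ℝ) * η := by
    have h1 : dist (f w) (f y) ≤ K * dist w y := hlipB.dist_le_mul _ hw2ρ _ hy2ρ
    rw [Real.dist_eq] at h1
    exact h1.trans (mul_le_mul_of_nonneg_left hwy.le K.coe_nonneg)
  have hglsplit : f (y + t • v) - f y
      ≤ (gl t - gl 0) + |f (y + t • v) - f (w + t • v)| + |f w - f y| := by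
    have hgl0 : gl 0 = f w := by simp [hgl]
    have hglt : gl t = f (w + t • v) := rfl
    rw [hgl0, hglt]
    have a1 := le_abs_self (f (y + t • v) - f (w + t • v))
    have a2 := le_abs_self (f w - f y)
    linarith
  have hfinal : f (y + t • v) - f y ≤ u * t + 2 * (K:ℝ) * η := by
    have := hglsplit
    linarith [hmain, hcmp1, hcmp2]
  -- contradiction
  have hKfrac : 2 * (K:ℝ) * η ≤ γ * t * ((K:ℝ) / (2 * ((K:ℝ) + 1))) := by
    have h1 : 2 * (K:ℝ) * η ≤ 2 * (K:ℝ) * (γ * t / (4 * ((K:ℝ) + 1))) :=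
      mul_le_mul_of_nonneg_left hηγ (by positivity)
    refine h1.trans (le_of_eq ?_)
    field_simp
    ring
  have hKfrac2 : γ * t * ((K:ℝ) / (2 * ((K:ℝ) + 1))) < γ * t / 2 := by
    have hlt : (K:ℝ) / (2 * ((K:ℝ) + 1)) < 1/2 := by
      rw [div_lt_div_iff₀ (by positivity) (by norm_num)]
      nlinarith [K.coe_nonneg]
    calc γ * t * ((K:ℝ) / (2 * ((K:ℝ) + 1))) < γ * t * (1/2) :=
          mul_lt_mul_of_pos_left hlt (by positivity)
      _ = γ * t / 2 := by ring
  nlinarith [hslope_t, hfinal, hKfrac, hKfrac2]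

private lemma nested_conv (f : Euc n → ℝ) (D2 : Set (Euc n)) (hlip : LocallyLipschitz f)
    (hD2diff : ∀ z ∈ D2, DifferentiableAt ℝ f z) (x : Euc n) {ε : ℝ}
    {g : Euc n →L[ℝ] ℝ}
    (hg : ∀ δ ∈ Ioi ε, g ∈ convexHull ℝ (closure (Pset f D2 x δ))) :
    g ∈ convexHull ℝ (⋂ δ ∈ Ioi ε, closure (Pset f D2 x δ)) := by
  classical
  haveI : ProperSpace (Euc n →L[ℝ] ℝ) := FiniteDimensional.proper ℝ _
  obtain ⟨L, hL0, hL⟩ := grad_bound f hlip x (ε + 1)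
  have hbdd : ∀ δ, ε < δ → δ ≤ ε + 1 → closure (Pset f D2 x δ) ⊆ closedBall 0 L := by
    intro δ _ hδ2
    refine closure_minimal ?_ Metric.isClosed_closedBall
    rintro h ⟨z, ⟨hz1, hz2⟩, rfl⟩
    rw [mem_closedBall_zero_iff]
    exact hL z (closedBall_subset_closedBall hδ2 hz1) (hD2diff z hz2)
  set C : Set (Euc n →L[ℝ] ℝ) := ⋂ δ ∈ Ioi ε, closure (Pset f D2 x δ) with hC
  by_contra hgC
  have hC_bdd : C ⊆ closedBall 0 L := by
    refine subset_trans ?_ (hbdd (ε+1) (by linarith) le_rfl)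
    exact iInter₂_subset (ε+1) (by rw [mem_Ioi]; linarith)
  have hC_closed : IsClosed C := isClosed_biInter fun δ _ => isClosed_closure
  have hC_comp : IsCompact C := (isCompact_closedBall _ _).of_isClosed_subset hC_closed hC_bdd
  have hKH_comp : IsCompact (convexHull ℝ C) := isCompact_convexHull_fd hC_comp
  obtain ⟨Φ, u, hΦlt, hΦg⟩ := geometric_hahn_banach_closed_point
    (convex_convexHull ℝ C) hKH_comp.isClosed hgC
  have hone : ∀ k : ℕ, (1:ℝ)/(k+1) ≤ 1 := by
    intro k
    rw [div_le_one (by positivity)]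
    have : (0:ℝ) ≤ k := Nat.cast_nonneg k
    linarith
  have hδexists : ∃ δ, ε < δ ∧ ∀ ξ ∈ closure (Pset f D2 x δ), Φ ξ < u := by
    by_contra hcon
    push_neg at hcon
    have hpick : ∀ k : ℕ, ∃ ξ, ξ ∈ closure (Pset f D2 x (ε + 1/(k+1))) ∧ u ≤ Φ ξ := by
      intro k
      obtain ⟨ξ, hξ1, hξ2⟩ := hcon (ε + 1/(k+1)) (lt_add_of_pos_right ε (by positivity))
      exact ⟨ξ, hξ1, hξ2⟩
    choose ξ hξ1 hξ2 using hpick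
    have hξball : ∀ k, ξ k ∈ closedBall 0 L := fun k =>
      hbdd _ (lt_add_of_pos_right ε (by positivity)) (by linarith [hone k]) (hξ1 k)
    obtain ⟨ξl, hξl, φ, hφ, hconv⟩ :=
      (isCompact_closedBall (0 : Euc n →L[ℝ] ℝ) L).tendsto_subseq hξball
    have hξlC : ξl ∈ C := by
      rw [hC]
      simp only [mem_iInter]
      intro δ hδ
      rw [mem_Ioi] at hδ
      obtain ⟨m, hm⟩ := exists_nat_one_div_lt (by linarith : (0:ℝ) < δ - ε)
      refine isClosed_closure.mem_of_tendsto hconv ?_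
      rw [eventually_atTop]
      refine ⟨m, fun k hk => ?_⟩
      refine closure_mono (Pset_mono f D2 x ?_) (hξ1 (φ k))
      have hφk : (m:ℝ) ≤ (φ k : ℝ) := by exact_mod_cast le_trans hk hφ.le_apply
      have hppos : (0:ℝ) < (m:ℝ) + 1 := by positivity
      have hmono2 : (1:ℝ)/(φ k + 1) ≤ 1/(m+1) :=
        one_div_le_one_div_of_le hppos (by linarith)
      linarith
    have h1 : Φ ξl < u := hΦlt _ (subset_convexHull ℝ C hξlC)
    have h2 : u ≤ Φ ξl := by
      refine ge_of_tendsto ((Φ.continuous.tendsto ξl).comp hconv) ?_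
      exact Eventually.of_forall fun k => hξ2 (φ k)
    linarith
  obtain ⟨δ, hδ, hbound⟩ := hδexists
  have hsub : convexHull ℝ (closure (Pset f D2 x δ)) ⊆ {ξ | Φ ξ < u} :=
    convexHull_min (fun ξ hξ => hbound ξ hξ) (convex_halfSpace_lt Φ.toLinearMap.isLinear u)
  have := hsub (hg δ hδ)
  simp only [mem_setOf_eq] at this
  linarith

theorem jet_proj_gradient (f : Euc n → ℝ) (D2 : Set (Euc n))
    (hf : StandingAssumptions f D2) (x : Euc n) (ε : ℝ) (hε : 0 ≤ ε) :
    convexHull ℝ ((fun j : JetSpace n => j.2.2.1) '' jet f D2 ε x) = goldstein f ε x := by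
  classical
  obtain ⟨hlip, hD2, hnull, hbdd4⟩ := hf
  have hD2diff : ∀ z ∈ D2, DifferentiableAt ℝ f z := fun z hz => by
    rw [hD2] at hz; exact hz.1
  haveI : ProperSpace (Euc n →L[ℝ] ℝ) := FiniteDimensional.proper ℝ _
  apply Subset.antisymm
  · -- easy direction
    rw [goldstein]
    apply convexHull_mono
    rintro ξ ⟨j, hj, rfl⟩
    simp only [mem_iInter]
    intro δ hδ
    rw [jet] at hj
    simp only [mem_iInter] at hj
    have h1 := hj δ hδ
    have h2 : (fun jj : JetSpace n => jj.2.2.1) j ∈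
        (fun jj : JetSpace n => jj.2.2.1) '' closure (jetMap f '' (closedBall x δ ∩ D2)) :=
      ⟨j, h1, rfl⟩
    have h3 := image_closure_subset_closure_image
      (f := fun jj : JetSpace n => jj.2.2.1)
      (continuous_fst.comp (continuous_snd.comp continuous_snd)) h2
    refine closure_mono ?_ h3
    rintro ξ' ⟨jj, ⟨z, ⟨hz1, hz2⟩, rfl⟩, rfl⟩
    exact ⟨z, hz1, hD2diff z hz2, rfl⟩
  · -- hard direction
    rw [goldstein]
    refine convexHull_min ?_ (convex_convexHull ℝ _)
    intro g hgH
    have hstep1 : ∀ δ' ∈ Ioi ε, g ∈ convexHull ℝ (closure (Pset f D2 x δ')) := by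
      intro δ' hδ'
      rw [mem_Ioi] at hδ'
      set δ : ℝ := (ε + δ')/2 with hδdef
      have hδ1 : ε < δ := by rw [hδdef]; linarith
      have hδ2 : δ < δ' := by rw [hδdef]; linarith
      simp only [mem_iInter] at hgH
      have hgd := hgH δ hδ1
      obtain ⟨L, hL0, hL⟩ := grad_bound f hlip x δ'
      have hPbdd : closure (Pset f D2 x δ') ⊆ closedBall 0 L := by
        refine closure_minimal ?_ Metric.isClosed_closedBall
        rintro h ⟨z, ⟨hz1, hz2⟩, rfl⟩
        rw [mem_closedBall_zero_iff]
        exact hL z hz1 (hD2diff z hz2)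
      have hPcomp : IsCompact (closure (Pset f D2 x δ')) :=
        (isCompact_closedBall _ _).of_isClosed_subset isClosed_closure hPbdd
      have hKHcomp : IsCompact (convexHull ℝ (closure (Pset f D2 x δ'))) :=
        isCompact_convexHull_fd hPcomp
      have hGdsub : {g : Euc n →L[ℝ] ℝ |
          ∃ y' ∈ closedBall x δ, DifferentiableAt ℝ f y' ∧ g = fderiv ℝ f y'} ⊆
          convexHull ℝ (closure (Pset f D2 x δ')) := by
        rintro ξ ⟨y', hy'ball, hy'diff, rfl⟩
        have hcl := clarke_null f D2 hlip hD2diff hnull hy'diff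
          (show (0:ℝ) < δ' - δ by linarith)
        refine convexHull_mono (closure_mono ?_) hcl
        rintro ξ' ⟨z, ⟨hz1, hz2⟩, rfl⟩
        refine ⟨z, ⟨?_, hz2⟩, rfl⟩
        rw [mem_closedBall]
        have d1 : dist z x ≤ dist z y' + dist y' x := dist_triangle _ _ _
        have d2 : dist z y' < δ' - δ := mem_ball.1 hz1
        have d3 : dist y' x ≤ δ := mem_closedBall.1 hy'ball
        linarith
      exact closure_minimal hGdsub hKHcomp.isClosed hgd
    have hstep2 := nested_conv f D2 hlip hD2diff x hstep1
    exact convexHull_mono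
      (inter_Pset_subset_proj f D2 ⟨hlip, hD2, hnull, hbdd4⟩ x hε) hstep2

end MainWork
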